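/- Consider the noisy CHSH game where the players share (Δ_ρ(Φ))^{⊗n}, the n-fold tensor power of the depolarized EPR pair Δ_ρ(Φ) = ρ|Φ⟩⟨Φ| + (1−ρ)I/4, with ρ ∈ (0,1). Suppose all four binary-valued observables P₀, P₁, Q₀, Q₁ (Hermitian, spectral norm ≤ 1) have normalized trace bounded in absolute value by ε_tr. Then the CHSH violation tr((P₀⊗Q₀ + P₀⊗Q₁ + P₁⊗Q₀ − P₁⊗Q₁)(Δ_ρ(Φ))^{⊗n}) is at most 2√2·ρ + √2·ε_tr²/ρ. In particular, if all observables are traceless, the maximal violation is at most 2√2·ρ. -/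

import Mathlib

open Matrix

noncomputable def specNorm {m : Type*} [Fintype m] [DecidableEq m] (M : Matrix m m ℂ) : ℝ :=
  ‖Matrix.toEuclideanCLM (𝕜 := ℂ) M‖

/-- Density matrix of the EPR pair `|Φ⟩⟨Φ|`, `Φ = (|00⟩+|11⟩)/√2`. -/
noncomputable def eprMat : Matrix (Fin 2 × Fin 2) (Fin 2 × Fin 2) ℂ :=
  fun p q => if p.1 = p.2 ∧ q.1 = q.2 then (1 / 2 : ℂ) else 0

/-- The depolarized EPR pair `Δ_ρ(Φ) = ρ|Φ⟩⟨Φ| + (1−ρ)I/4`. -/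
noncomputable def depEPR (ρ : ℝ) : Matrix (Fin 2 × Fin 2) (Fin 2 × Fin 2) ℂ :=
  (ρ : ℂ) • eprMat + (((1 - ρ) / 4 : ℝ) : ℂ) • 1

/-- `n`-fold tensor power `(Δ_ρ(Φ))^{⊗n}`, as a bipartite operator where the first
factor carries all of Alice's qubits and the second all of Bob's. -/
noncomputable def depEPRn (ρ : ℝ) (n : ℕ) :
    Matrix ((Fin n → Fin 2) × (Fin n → Fin 2)) ((Fin n → Fin 2) × (Fin n → Fin 2)) ℂ :=
  fun x y => ∏ i, depEPR ρ (x.1 i, x.2 i) (y.1 i, y.2 i)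

/-- Bipartite tensor product `P ⊗ Q` of Alice's and Bob's observables. -/
noncomputable def bkron {n : ℕ} (P Q : Matrix (Fin n → Fin 2) (Fin n → Fin 2) ℂ) :
    Matrix ((Fin n → Fin 2) × (Fin n → Fin 2)) ((Fin n → Fin 2) × (Fin n → Fin 2)) ℂ :=
  fun x y => P x.1 y.1 * Q x.2 y.2

open Finset
namespace Stmt18

noncomputable def kap (ρ : ℝ) (u v s t : Fin 2) : ℂ :=
  (ρ : ℂ) * ((if u = s then 1 else 0) * (if v = t then 1 else 0))
    + ((1 - ρ : ℝ) : ℂ) / 2 * ((if u = v then 1 else 0) * (if s = t then 1 else 0))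

noncomputable def Tm (ρ : ℝ) {n : ℕ} (Q : Matrix (Fin n → Fin 2) (Fin n → Fin 2) ℂ) :
    Matrix (Fin n → Fin 2) (Fin n → Fin 2) ℂ :=
  fun u v => ∑ s, ∑ t, (∏ i, kap ρ (u i) (v i) (s i) (t i)) * Q s t

lemma dep_entry (ρ : ℝ) (a b c d : Fin 2) :
    depEPR ρ (a, b) (c, d) = 2⁻¹ * kap ρ c a d b := by
  fin_cases a <;> fin_cases b <;> fin_cases c <;> fin_cases d <;>
    simp [depEPR, eprMat, kap, Matrix.one_apply, Prod.ext_iff] <;>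
    push_cast <;> ring

lemma sum_prod_eq {n : ℕ} {κ : Type*} [Fintype κ] (g : Fin n → κ → ℂ) :
    ∑ u : Fin n → κ, ∏ i, g i (u i) = ∏ i, ∑ s, g i s := by
  rw [Finset.prod_univ_sum, Fintype.piFinset_univ]

lemma sum_sum_prod {n : ℕ} {κ : Type*} [Fintype κ] (f : Fin n → κ → κ → ℂ) :
    ∑ u : Fin n → κ, ∑ v : Fin n → κ, ∏ i, f i (u i) (v i) = ∏ i, ∑ s, ∑ t, f i s t := by
  rw [Finset.sum_congr rfl (fun u _ => sum_prod_eq (fun i t => f i (u i) t)),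
    sum_prod_eq (fun i s => ∑ t, f i s t)]

lemma swap_sum {α β γ : Type*} [Fintype α] [Fintype β] [Fintype γ] (f : α → β → γ → ℂ) :
    ∑ a : α, ∑ u : β, ∑ v : γ, f a u v = ∑ u, ∑ v, ∑ a, f a u v := by
  rw [Finset.sum_comm]
  exact Finset.sum_congr rfl fun u _ => Finset.sum_comm

lemma trace_eq {n : ℕ} (ρ : ℝ) (P Q : Matrix (Fin n → Fin 2) (Fin n → Fin 2) ℂ) :
    ((bkron P Q) * depEPRn ρ n).trace
      = ((2 : ℂ) ^ n)⁻¹ * ∑ u, ∑ v, P u v * Tm ρ Q u v := by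
  have hdep : ∀ x y : (Fin n → Fin 2) × (Fin n → Fin 2),
      depEPRn ρ n y x = ((2 : ℂ) ^ n)⁻¹ * ∏ i, kap ρ (x.1 i) (y.1 i) (x.2 i) (y.2 i) := by
    intro x y
    rw [depEPRn,
      Finset.prod_congr rfl (fun i (_ : i ∈ univ) => dep_entry ρ (y.1 i) (y.2 i) (x.1 i) (x.2 i)),
      Finset.prod_mul_distrib, Finset.prod_const, Finset.card_univ, Fintype.card_fin, ← inv_pow]
  calc ((bkron P Q) * depEPRn ρ n).trace
      = ∑ x : (Fin n → Fin 2) × (Fin n → Fin 2), ∑ y, bkron P Q x y * depEPRn ρ n y x := by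
        simp [Matrix.trace, Matrix.mul_apply, Matrix.diag]
    _ = ∑ x₁, ∑ x₂, ∑ y₁, ∑ y₂, P x₁ y₁ * Q x₂ y₂ *
          (((2 : ℂ) ^ n)⁻¹ * ∏ i, kap ρ (x₁ i) (y₁ i) (x₂ i) (y₂ i)) := by
        rw [Fintype.sum_prod_type]
        refine Finset.sum_congr rfl fun x₁ _ => Finset.sum_congr rfl fun x₂ _ => ?_
        rw [Fintype.sum_prod_type]
        exact Finset.sum_congr rfl fun y₁ _ => Finset.sum_congr rfl fun y₂ _ => by
          rw [hdep (x₁, x₂) (y₁, y₂)]; rfl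
    _ = ((2 : ℂ) ^ n)⁻¹ * ∑ u, ∑ v, P u v * Tm ρ Q u v := by
        simp only [Tm, Finset.mul_sum]
        refine Finset.sum_congr rfl fun x₁ _ => ?_
        rw [Finset.sum_comm]
        exact Finset.sum_congr rfl fun y₁ _ => Finset.sum_congr rfl fun x₂ _ =>
          Finset.sum_congr rfl fun y₂ _ => by ring


noncomputable def pau : Fin 4 → Matrix (Fin 2) (Fin 2) ℂ
  | 0 => !![1, 0; 0, 1]
  | 1 => !![0, 1; 1, 0]
  | 2 => !![0, -Complex.I; Complex.I, 0]
  | 3 => !![1, 0; 0, -1]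

noncomputable def pauN {n : ℕ} (a : Fin n → Fin 4) :
    Matrix (Fin n → Fin 2) (Fin n → Fin 2) ℂ :=
  fun u v => ∏ i, pau (a i) (u i) (v i)


lemma pau_orth (a b : Fin 4) :
    ∑ s : Fin 2, ∑ t : Fin 2, (starRingEnd ℂ) (pau a s t) * pau b s t
      = if a = b then 2 else 0 := by
  fin_cases a <;> fin_cases b <;>
    simp [pau, Fin.sum_univ_two, Complex.conj_I, Complex.I_mul_I] <;> norm_num

lemma pau_complete (s t s' t' : Fin 2) :
    ∑ a : Fin 4, pau a s t * (starRingEnd ℂ) (pau a s' t')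
      = if s = s' ∧ t = t' then 2 else 0 := by
  fin_cases s <;> fin_cases t <;> fin_cases s' <;> fin_cases t' <;>
    simp [pau, Fin.sum_univ_four, Complex.conj_I, Complex.I_mul_I] <;> norm_num

lemma kap_pau (ρ : ℝ) (c : Fin 4) (u v : Fin 2) :
    ∑ s : Fin 2, ∑ t : Fin 2, kap ρ u v s t * pau c s t
      = (if c = 0 then 1 else (ρ : ℂ)) * pau c u v := by
  fin_cases c <;> fin_cases u <;> fin_cases v <;>
    simp [kap, pau, Fin.sum_univ_two] <;> ring

lemma pau_zero (s t : Fin 2) : pau 0 s t = if s = t then 1 else 0 := by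
  fin_cases s <;> fin_cases t <;> simp [pau]


variable {n : ℕ}

lemma prod_ite_two (a b : Fin n → Fin 4) :
    (∏ i, if a i = b i then (2 : ℂ) else 0) = if a = b then (2 : ℂ) ^ n else 0 := by
  by_cases h : a = b
  · subst h; simp
  · rw [if_neg h]
    obtain ⟨i, hi⟩ := Function.ne_iff.mp h
    exact Finset.prod_eq_zero (Finset.mem_univ i) (if_neg hi)

lemma prod_ite_and (u v u' v' : Fin n → Fin 2) :
    (∏ i, if u i = u' i ∧ v i = v' i then (2 : ℂ) else 0)
      = if u = u' ∧ v = v' then (2 : ℂ) ^ n else 0 := by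
  by_cases h : u = u' ∧ v = v'
  · obtain ⟨h1, h2⟩ := h; subst h1; subst h2; simp
  · rw [if_neg h]
    have : ∃ i, ¬(u i = u' i ∧ v i = v' i) := by
      by_contra hc
      push_neg at hc
      exact h ⟨funext fun i => (hc i).1, funext fun i => (hc i).2⟩
    obtain ⟨i, hi⟩ := this
    exact Finset.prod_eq_zero (Finset.mem_univ i) (if_neg hi)

set_option maxHeartbeats 4000000 in
lemma pauN_orth (a b : Fin n → Fin 4) :
    ∑ u : Fin n → Fin 2, ∑ v : Fin n → Fin 2, (starRingEnd ℂ) (pauN a u v) * pauN b u v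
      = if a = b then (2 : ℂ) ^ n else 0 := by
  have h : ∀ u v : Fin n → Fin 2, (starRingEnd ℂ) (pauN a u v) * pauN b u v
      = ∏ i, (starRingEnd ℂ) (pau (a i) (u i) (v i)) * pau (b i) (u i) (v i) := by
    intro u v
    rw [pauN, pauN, map_prod, ← Finset.prod_mul_distrib]
  calc ∑ u : Fin n → Fin 2, ∑ v : Fin n → Fin 2, (starRingEnd ℂ) (pauN a u v) * pauN b u v
      = ∑ u : Fin n → Fin 2, ∑ v : Fin n → Fin 2,
          ∏ i, (starRingEnd ℂ) (pau (a i) (u i) (v i)) * pau (b i) (u i) (v i) := by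
        exact Finset.sum_congr rfl fun u _ => Finset.sum_congr rfl fun v _ => h u v
    _ = ∏ i, ∑ s, ∑ t, (starRingEnd ℂ) (pau (a i) s t) * pau (b i) s t :=
        sum_sum_prod (fun i s t => (starRingEnd ℂ) (pau (a i) s t) * pau (b i) s t)
    _ = ∏ i, if a i = b i then (2 : ℂ) else 0 :=
        Finset.prod_congr rfl fun i _ => pau_orth (a i) (b i)
    _ = if a = b then (2 : ℂ) ^ n else 0 := prod_ite_two a b

set_option maxHeartbeats 4000000 in
lemma pauN_complete (u v u' v' : Fin n → Fin 2) :
    ∑ a : Fin n → Fin 4, pauN a u v * (starRingEnd ℂ) (pauN a u' v')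
      = if u = u' ∧ v = v' then (2 : ℂ) ^ n else 0 := by
  calc ∑ a : Fin n → Fin 4, pauN a u v * (starRingEnd ℂ) (pauN a u' v')
      = ∑ a : Fin n → Fin 4,
          ∏ i, pau (a i) (u i) (v i) * (starRingEnd ℂ) (pau (a i) (u' i) (v' i)) := by
        refine Finset.sum_congr rfl fun a _ => ?_
        rw [pauN, pauN, map_prod, ← Finset.prod_mul_distrib]
    _ = ∏ i, ∑ c : Fin 4, pau c (u i) (v i) * (starRingEnd ℂ) (pau c (u' i) (v' i)) :=
        sum_prod_eq (fun i c => pau c (u i) (v i) * (starRingEnd ℂ) (pau c (u' i) (v' i)))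
    _ = ∏ i, if u i = u' i ∧ v i = v' i then (2 : ℂ) else 0 :=
        Finset.prod_congr rfl fun i _ => pau_complete _ _ _ _
    _ = if u = u' ∧ v = v' then (2 : ℂ) ^ n else 0 := prod_ite_and u v u' v'

noncomputable def coef (Q : Matrix (Fin n → Fin 2) (Fin n → Fin 2) ℂ)
    (a : Fin n → Fin 4) : ℂ :=
  ((2 : ℂ) ^ n)⁻¹ * ∑ u, ∑ v, (starRingEnd ℂ) (pauN a u v) * Q u v

lemma two_pow_ne : ((2 : ℂ) ^ n) ≠ 0 := pow_ne_zero _ two_ne_zero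

lemma expand (Q : Matrix (Fin n → Fin 2) (Fin n → Fin 2) ℂ) (u v : Fin n → Fin 2) :
    Q u v = ∑ a, coef Q a * pauN a u v := by
  have step : ∑ a, coef Q a * pauN a u v
      = ∑ a : Fin n → Fin 4, ∑ u', ∑ v',
          ((2 : ℂ) ^ n)⁻¹ * (Q u' v' * (pauN a u v * (starRingEnd ℂ) (pauN a u' v'))) := by
    refine Finset.sum_congr rfl fun a _ => ?_
    rw [coef, mul_assoc, Finset.sum_mul, Finset.mul_sum]
    refine Finset.sum_congr rfl fun u' _ => ?_
    rw [Finset.sum_mul, Finset.mul_sum]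
    exact Finset.sum_congr rfl fun v' _ => by ring
  rw [step, swap_sum (fun a u' v' =>
    ((2 : ℂ) ^ n)⁻¹ * (Q u' v' * (pauN a u v * (starRingEnd ℂ) (pauN a u' v'))))]
  have coll : ∀ u' v' : Fin n → Fin 2,
      ∑ a : Fin n → Fin 4,
          ((2 : ℂ) ^ n)⁻¹ * (Q u' v' * (pauN a u v * (starRingEnd ℂ) (pauN a u' v')))
        = ((2 : ℂ) ^ n)⁻¹ * (Q u' v' * (if u = u' ∧ v = v' then (2 : ℂ) ^ n else 0)) := by
    intro u' v'
    rw [← Finset.mul_sum, ← Finset.mul_sum, pauN_complete]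
  rw [Finset.sum_congr rfl fun u' _ => Finset.sum_congr rfl fun v' _ => coll u' v']
  simp only [ite_and, mul_ite, mul_zero, Finset.sum_ite_eq, Finset.mem_univ, if_true]
  field_simp
  simp [Finset.sum_ite_irrel]

noncomputable def wt (a : Fin n → Fin 4) : ℕ := (univ.filter fun i => ¬ a i = 0).card

lemma Tm_pauN (ρ : ℝ) (a : Fin n → Fin 4) (u v : Fin n → Fin 2) :
    Tm ρ (pauN a) u v = (ρ : ℂ) ^ wt a * pauN a u v := by
  calc Tm ρ (pauN a) u v
      = ∑ s : Fin n → Fin 2, ∑ t : Fin n → Fin 2,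
          ∏ i, kap ρ (u i) (v i) (s i) (t i) * pau (a i) (s i) (t i) := by
        rw [Tm]
        exact Finset.sum_congr rfl fun s _ => Finset.sum_congr rfl fun t _ =>
          (Finset.prod_mul_distrib).symm
    _ = ∏ i, ∑ s, ∑ t, kap ρ (u i) (v i) s t * pau (a i) s t :=
        sum_sum_prod (fun i s t => kap ρ (u i) (v i) s t * pau (a i) s t)
    _ = ∏ i, (if a i = 0 then 1 else (ρ : ℂ)) * pau (a i) (u i) (v i) :=
        Finset.prod_congr rfl fun i _ => kap_pau ρ (a i) (u i) (v i)
    _ = (∏ i, if a i = 0 then 1 else (ρ : ℂ)) * pauN a u v := Finset.prod_mul_distrib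
    _ = (ρ : ℂ) ^ wt a * pauN a u v := by
        rw [Finset.prod_ite, Finset.prod_const_one, one_mul, Finset.prod_const, wt]

lemma Tm_coef (ρ : ℝ) (Q : Matrix (Fin n → Fin 2) (Fin n → Fin 2) ℂ)
    (u v : Fin n → Fin 2) :
    Tm ρ Q u v = ∑ a, (coef Q a * (ρ : ℂ) ^ wt a) * pauN a u v := by
  have step : Tm ρ Q u v
      = ∑ s : Fin n → Fin 2, ∑ t : Fin n → Fin 2, ∑ a : Fin n → Fin 4,
          coef Q a * ((∏ i, kap ρ (u i) (v i) (s i) (t i)) * pauN a s t) := by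
    rw [Tm]
    refine Finset.sum_congr rfl fun s _ => Finset.sum_congr rfl fun t _ => ?_
    rw [expand Q s t, Finset.mul_sum]
    exact Finset.sum_congr rfl fun a _ => by ring
  rw [step, ← swap_sum (fun a s t =>
    coef Q a * ((∏ i, kap ρ (u i) (v i) (s i) (t i)) * pauN a s t))]
  refine Finset.sum_congr rfl fun a _ => ?_
  have hfac : ∑ s : Fin n → Fin 2, ∑ t : Fin n → Fin 2,
      coef Q a * ((∏ i, kap ρ (u i) (v i) (s i) (t i)) * pauN a s t)
      = coef Q a * ∑ s : Fin n → Fin 2, ∑ t : Fin n → Fin 2,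
          (∏ i, kap ρ (u i) (v i) (s i) (t i)) * pauN a s t := by
    rw [Finset.mul_sum]
    exact Finset.sum_congr rfl fun s _ => (Finset.mul_sum _ _ _).symm
  have hTm : ∑ s : Fin n → Fin 2, ∑ t : Fin n → Fin 2,
      (∏ i, kap ρ (u i) (v i) (s i) (t i)) * pauN a s t = Tm ρ (pauN a) u v := rfl
  rw [hfac, hTm, Tm_pauN]
  ring

noncomputable def frob (M : Matrix (Fin n → Fin 2) (Fin n → Fin 2) ℂ) : ℝ :=
  ∑ u, ∑ v, Complex.normSq (M u v)

lemma frob_of_coef (c : (Fin n → Fin 4) → ℂ) (M : Matrix (Fin n → Fin 2) (Fin n → Fin 2) ℂ)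
    (hM : ∀ u v, M u v = ∑ a, c a * pauN a u v) :
    frob M = (2 : ℝ) ^ n * ∑ a, Complex.normSq (c a) := by
  have key : ∑ u : Fin n → Fin 2, ∑ v : Fin n → Fin 2, (starRingEnd ℂ) (M u v) * M u v
      = (2 : ℂ) ^ n * ∑ a, (starRingEnd ℂ) (c a) * c a := by
    have e1 : ∑ u : Fin n → Fin 2, ∑ v : Fin n → Fin 2, (starRingEnd ℂ) (M u v) * M u v
        = ∑ u : Fin n → Fin 2, ∑ v : Fin n → Fin 2, ∑ a : Fin n → Fin 4, ∑ b : Fin n → Fin 4,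
            (starRingEnd ℂ) (c a) * c b * ((starRingEnd ℂ) (pauN a u v) * pauN b u v) := by
      refine Finset.sum_congr rfl fun u _ => Finset.sum_congr rfl fun v _ => ?_
      rw [hM u v, map_sum, Finset.sum_mul_sum]
      exact Finset.sum_congr rfl fun a _ => Finset.sum_congr rfl fun b _ => by
        rw [RingHom.map_mul]; ring
    rw [e1, Finset.sum_congr rfl fun u (_ : u ∈ univ) => swap_sum (fun v a b =>
        (starRingEnd ℂ) (c a) * c b * ((starRingEnd ℂ) (pauN a u v) * pauN b u v)),
      swap_sum (fun u a b => ∑ v : Fin n → Fin 2,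
        (starRingEnd ℂ) (c a) * c b * ((starRingEnd ℂ) (pauN a u v) * pauN b u v))]
    have e2 : ∀ a b : Fin n → Fin 4,
        ∑ u : Fin n → Fin 2, ∑ v : Fin n → Fin 2,
          (starRingEnd ℂ) (c a) * c b * ((starRingEnd ℂ) (pauN a u v) * pauN b u v)
        = (starRingEnd ℂ) (c a) * c b * (if a = b then (2 : ℂ) ^ n else 0) := by
      intro a b
      rw [← pauN_orth a b, Finset.mul_sum]
      exact Finset.sum_congr rfl fun u _ => (Finset.mul_sum _ _ _).symm
    rw [Finset.sum_congr rfl fun a (_ : a ∈ univ) => Finset.sum_congr rfl fun b (_ : b ∈ univ) =>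
      e2 a b]
    rw [Finset.mul_sum]
    refine Finset.sum_congr rfl fun a _ => ?_
    simp [Finset.sum_ite_eq, mul_ite, mul_zero, mul_comm, mul_left_comm]
  have lhs : ∑ u : Fin n → Fin 2, ∑ v : Fin n → Fin 2, (starRingEnd ℂ) (M u v) * M u v
      = ((frob M : ℝ) : ℂ) := by
    rw [frob]
    push_cast
    exact Finset.sum_congr rfl fun u _ => Finset.sum_congr rfl fun v _ => by
      rw [mul_comm, Complex.mul_conj]
  have rhs : ∑ a : Fin n → Fin 4, (starRingEnd ℂ) (c a) * c a
      = ((∑ a, Complex.normSq (c a) : ℝ) : ℂ) := by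
    push_cast
    exact Finset.sum_congr rfl fun a _ => by rw [mul_comm, Complex.mul_conj]
  rw [lhs, rhs] at key
  have : ((frob M : ℝ) : ℂ) = (((2 : ℝ) ^ n * ∑ a, Complex.normSq (c a) : ℝ) : ℂ) := by
    rw [key]; push_cast; ring
  exact_mod_cast this

lemma pauN_zero (u v : Fin n → Fin 2) :
    pauN (fun _ : Fin n => (0 : Fin 4)) u v = if u = v then 1 else 0 := by
  rw [pauN]
  by_cases h : u = v
  · subst h; simp [pau_zero]
  · rw [if_neg h]
    obtain ⟨i, hi⟩ := Function.ne_iff.mp h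
    exact Finset.prod_eq_zero (Finset.mem_univ i) (by rw [pau_zero, if_neg hi])

lemma coef_zero (Q : Matrix (Fin n → Fin 2) (Fin n → Fin 2) ℂ) :
    coef Q (fun _ : Fin n => (0 : Fin 4)) = ((2 : ℂ) ^ n)⁻¹ * Q.trace := by
  rw [coef]
  congr 1
  have : ∀ u v : Fin n → Fin 2,
      (starRingEnd ℂ) (pauN (fun _ : Fin n => (0 : Fin 4)) u v) * Q u v
        = (if u = v then 1 else 0) * Q u v := by
    intro u v; rw [pauN_zero]; split <;> simp
  rw [Finset.sum_congr rfl fun u (_ : u ∈ univ) => Finset.sum_congr rfl fun v (_ : v ∈ univ) =>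
    this u v]
  simp [Matrix.trace, Matrix.diag, Finset.sum_ite_eq, ite_mul]

lemma card_V : Fintype.card (Fin n → Fin 2) = 2 ^ n := by
  simp [Fintype.card_fun]

set_option maxHeartbeats 4000000 in
lemma frob_le_of_specNorm (Q : Matrix (Fin n → Fin 2) (Fin n → Fin 2) ℂ)
    (h : specNorm Q ≤ 1) : frob Q ≤ 2 ^ n := by
  have col : ∀ v, ∑ u, Complex.normSq (Q u v) ≤ 1 := by
    intro v
    set T : EuclideanSpace ℂ (Fin n → Fin 2) →L[ℂ] EuclideanSpace ℂ (Fin n → Fin 2) :=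
      toEuclideanCLM (𝕜 := ℂ) Q with hT
    set x : EuclideanSpace ℂ (Fin n → Fin 2) := EuclideanSpace.single v (1 : ℂ) with hx
    have happ : T x = (WithLp.equiv 2 ((Fin n → Fin 2) → ℂ)).symm
        (Q.mulVec (Pi.single v (1 : ℂ))) := by
      rw [hT, hx]
      rfl
    have hb : ‖T x‖ ≤ 1 := by
      calc ‖T x‖ ≤ ‖T‖ * ‖x‖ := T.le_opNorm x
        _ ≤ 1 := by
            rw [hx, EuclideanSpace.norm_single, norm_one, mul_one]
            exact h
    rw [happ] at hb
    have hnorm : ‖(WithLp.equiv 2 ((Fin n → Fin 2) → ℂ)).symm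
        (Q.mulVec (Pi.single v (1 : ℂ)))‖ = Real.sqrt (∑ u, Complex.normSq (Q u v)) := by
      rw [EuclideanSpace.norm_eq]
      congr 1
      refine Finset.sum_congr rfl fun u _ => ?_
      simp [Matrix.mulVec_single, Complex.normSq_eq_norm_sq]
    rw [hnorm] at hb
    have h0 : (0 : ℝ) ≤ ∑ u, Complex.normSq (Q u v) :=
      Finset.sum_nonneg fun u _ => Complex.normSq_nonneg _
    nlinarith [Real.sq_sqrt h0, Real.sqrt_nonneg (∑ u, Complex.normSq (Q u v))]
  calc frob Q = ∑ v, ∑ u, Complex.normSq (Q u v) := Finset.sum_comm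
    _ ≤ ∑ _v : Fin n → Fin 2, (1 : ℝ) := Finset.sum_le_sum fun v _ => col v
    _ = 2 ^ n := by
        rw [Finset.sum_const, Finset.card_univ, card_V]
        simp

lemma frob_nonneg (M : Matrix (Fin n → Fin 2) (Fin n → Fin 2) ℂ) : 0 ≤ frob M :=
  Finset.sum_nonneg fun u _ => Finset.sum_nonneg fun v _ => Complex.normSq_nonneg _

lemma frob_Tm_le (ρ ε : ℝ) (hρ0 : 0 ≤ ρ) (hρ1 : ρ ≤ 1) (hε : 0 ≤ ε)
    (Q : Matrix (Fin n → Fin 2) (Fin n → Fin 2) ℂ)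
    (hfrob : frob Q ≤ 2 ^ n) (htr : ‖Q.trace‖ / 2 ^ n ≤ ε) :
    frob (Tm ρ Q) ≤ 2 ^ n * (ρ ^ 2 + ε ^ 2) := by
  have hTf : frob (Tm ρ Q) = (2 : ℝ) ^ n * ∑ a, Complex.normSq (coef Q a * (ρ : ℂ) ^ wt a) :=
    frob_of_coef _ _ (Tm_coef ρ Q)
  have hQf : frob Q = (2 : ℝ) ^ n * ∑ a, Complex.normSq (coef Q a) :=
    frob_of_coef _ _ (expand Q)
  have h2n : (0 : ℝ) < 2 ^ n := by positivity
  have hsum : ∑ a, Complex.normSq (coef Q a) ≤ 1 := by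
    rw [hQf] at hfrob
    nlinarith
  have hz : Complex.normSq (coef Q (fun _ => 0)) ≤ ε ^ 2 := by
    have hle : ‖coef Q (fun _ => 0)‖ ≤ ε := by
      rw [coef_zero, norm_mul]
      have h1 : ‖((2 : ℂ) ^ n)⁻¹‖ = ((2 : ℝ) ^ n)⁻¹ := by
        simp
      rw [h1]
      calc ((2 : ℝ) ^ n)⁻¹ * ‖Q.trace‖ = ‖Q.trace‖ / 2 ^ n := by ring
        _ ≤ ε := htr
    calc Complex.normSq (coef Q (fun _ => 0)) = ‖coef Q (fun _ => 0)‖ ^ 2 := by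
          exact Complex.normSq_eq_norm_sq _
      _ ≤ ε ^ 2 := by nlinarith [norm_nonneg (coef Q (fun _ => 0))]
  have hterm : ∀ a : Fin n → Fin 4, Complex.normSq (coef Q a * (ρ : ℂ) ^ wt a)
      = Complex.normSq (coef Q a) * (ρ ^ 2) ^ wt a := by
    intro a
    rw [Complex.normSq_mul]
    congr 1
    rw [show ((ρ : ℂ) ^ wt a) = ((ρ ^ wt a : ℝ) : ℂ) by push_cast; ring, Complex.normSq_ofReal,
      ← pow_add, ← two_mul, pow_mul]
  have hwz : wt (fun _ : Fin n => (0 : Fin 4)) = 0 := by simp [wt]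
  have hsplit : ∑ a, Complex.normSq (coef Q a * (ρ : ℂ) ^ wt a)
      = Complex.normSq (coef Q (fun _ => 0) * (ρ : ℂ) ^ wt (fun _ : Fin n => (0 : Fin 4)))
        + ∑ a ∈ univ.erase (fun _ : Fin n => (0 : Fin 4)),
            Complex.normSq (coef Q a * (ρ : ℂ) ^ wt a) :=
    (Finset.add_sum_erase univ _ (Finset.mem_univ _)).symm
  have herase : ∑ a ∈ univ.erase (fun _ : Fin n => (0 : Fin 4)),
      Complex.normSq (coef Q a * (ρ : ℂ) ^ wt a)
      ≤ ρ ^ 2 * ∑ a ∈ univ.erase (fun _ : Fin n => (0 : Fin 4)), Complex.normSq (coef Q a) := by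
    rw [Finset.mul_sum]
    refine Finset.sum_le_sum fun a ha => ?_
    rw [hterm a]
    have hane : a ≠ (fun _ : Fin n => (0 : Fin 4)) := Finset.ne_of_mem_erase ha
    have hwt : 1 ≤ wt a := by
      obtain ⟨i, hi⟩ := Function.ne_iff.mp hane
      refine Finset.card_pos.mpr ⟨i, ?_⟩
      simp only [Finset.mem_filter, Finset.mem_univ, true_and]
      exact hi
    have hpow : (ρ ^ 2) ^ wt a ≤ (ρ ^ 2) ^ 1 :=
      pow_le_pow_of_le_one (by positivity) (by nlinarith) hwt
    have := Complex.normSq_nonneg (coef Q a)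
    nlinarith
  have herase2 : ∑ a ∈ univ.erase (fun _ : Fin n => (0 : Fin 4)), Complex.normSq (coef Q a) ≤ 1 := by
    refine le_trans (Finset.sum_le_sum_of_subset_of_nonneg (Finset.erase_subset _ _)
      (fun a _ _ => Complex.normSq_nonneg _)) hsum
  rw [hTf, hsplit, hterm, hwz, pow_zero, mul_one]
  have hρ2 : (0 : ℝ) ≤ ρ ^ 2 := by positivity
  calc (2:ℝ) ^ n * (Complex.normSq (coef Q fun _ => 0)
        + ∑ a ∈ univ.erase (fun _ : Fin n => (0 : Fin 4)), Complex.normSq (coef Q a * (ρ:ℂ) ^ wt a))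
      ≤ (2:ℝ) ^ n * (ε ^ 2 + ρ ^ 2 * 1) := by
        have := herase.trans (by nlinarith : ρ ^ 2 * ∑ a ∈ univ.erase (fun _ : Fin n => (0 : Fin 4)),
          Complex.normSq (coef Q a) ≤ ρ ^ 2 * 1)
        nlinarith
    _ = 2 ^ n * (ρ ^ 2 + ε ^ 2) := by ring

lemma re_sum_le (P R : Matrix (Fin n → Fin 2) (Fin n → Fin 2) ℂ) (hP : frob P ≤ 2 ^ n) :
    (∑ u : Fin n → Fin 2, ∑ v : Fin n → Fin 2, P u v * R u v).re
      ≤ Real.sqrt (2 ^ n) * Real.sqrt (frob R) := by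
  have h1 : (∑ u : Fin n → Fin 2, ∑ v : Fin n → Fin 2, P u v * R u v).re
      ≤ ‖∑ u : Fin n → Fin 2, ∑ v : Fin n → Fin 2, P u v * R u v‖ :=
    Complex.re_le_norm _
  have h2 : ‖∑ u : Fin n → Fin 2, ∑ v : Fin n → Fin 2, P u v * R u v‖
      ≤ ∑ u : Fin n → Fin 2, ∑ v : Fin n → Fin 2, ‖P u v‖ * ‖R u v‖ :=
    (norm_sum_le _ _).trans (Finset.sum_le_sum fun u _ =>
      (norm_sum_le _ _).trans (Finset.sum_le_sum fun v _ => le_of_eq (norm_mul _ _)))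
  have h3 : (∑ u : Fin n → Fin 2, ∑ v : Fin n → Fin 2, ‖P u v‖ * ‖R u v‖) ^ 2
      ≤ frob P * frob R := by
    have hcs := Finset.sum_mul_sq_le_sq_mul_sq
      (univ : Finset ((Fin n → Fin 2) × (Fin n → Fin 2)))
      (fun p => ‖P p.1 p.2‖) (fun p => ‖R p.1 p.2‖)
    have e1 : ∑ p : (Fin n → Fin 2) × (Fin n → Fin 2), ‖P p.1 p.2‖ * ‖R p.1 p.2‖
        = ∑ u : Fin n → Fin 2, ∑ v : Fin n → Fin 2, ‖P u v‖ * ‖R u v‖ := by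
      rw [Fintype.sum_prod_type]
    have e2 : ∀ M : Matrix (Fin n → Fin 2) (Fin n → Fin 2) ℂ,
        ∑ p : (Fin n → Fin 2) × (Fin n → Fin 2), ‖M p.1 p.2‖ ^ 2 = frob M := by
      intro M
      rw [frob, Fintype.sum_prod_type]
      exact Finset.sum_congr rfl fun u _ => Finset.sum_congr rfl fun v _ => by
        exact (Complex.normSq_eq_norm_sq _).symm
    rw [e1, e2 P, e2 R] at hcs
    exact hcs
  have h4 : ∑ u : Fin n → Fin 2, ∑ v : Fin n → Fin 2, ‖P u v‖ * ‖R u v‖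
      ≤ Real.sqrt (2 ^ n) * Real.sqrt (frob R) := by
    have hnn : (0 : ℝ) ≤ ∑ u : Fin n → Fin 2, ∑ v : Fin n → Fin 2, ‖P u v‖ * ‖R u v‖ :=
      Finset.sum_nonneg fun u _ => Finset.sum_nonneg fun v _ =>
        mul_nonneg (norm_nonneg _) (norm_nonneg _)
    have step : ∑ u : Fin n → Fin 2, ∑ v : Fin n → Fin 2, ‖P u v‖ * ‖R u v‖
        ≤ Real.sqrt (frob P * frob R) := by
      rw [show Real.sqrt (frob P * frob R) = Real.sqrt (frob P) * Real.sqrt (frob R) from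
        Real.sqrt_mul (frob_nonneg P) _]
      have := Real.sqrt_le_sqrt (le_of_eq rfl : frob P * frob R ≤ frob P * frob R)
      nlinarith [Real.sq_sqrt (mul_nonneg (frob_nonneg P) (frob_nonneg R)),
        Real.sqrt_nonneg (frob P * frob R), Real.sqrt_mul (frob_nonneg P) (frob R),
        Real.sqrt_nonneg (frob P), Real.sqrt_nonneg (frob R)]
    refine step.trans ?_
    rw [show Real.sqrt (frob P * frob R) = Real.sqrt (frob P) * Real.sqrt (frob R) from
      Real.sqrt_mul (frob_nonneg P) _]
    have : Real.sqrt (frob P) ≤ Real.sqrt (2 ^ n) := Real.sqrt_le_sqrt hP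
    nlinarith [Real.sqrt_nonneg (frob R), Real.sqrt_nonneg (frob P)]
  linarith

lemma Tm_add (ρ : ℝ) (A B : Matrix (Fin n → Fin 2) (Fin n → Fin 2) ℂ) (u v : Fin n → Fin 2) :
    Tm ρ (A + B) u v = Tm ρ A u v + Tm ρ B u v := by
  simp [Tm, Matrix.add_apply, mul_add, Finset.sum_add_distrib]

lemma Tm_sub (ρ : ℝ) (A B : Matrix (Fin n → Fin 2) (Fin n → Fin 2) ℂ) (u v : Fin n → Fin 2) :
    Tm ρ (A - B) u v = Tm ρ A u v - Tm ρ B u v := by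
  simp [Tm, Matrix.sub_apply, mul_sub, Finset.sum_sub_distrib]

lemma frob_par (A B : Matrix (Fin n → Fin 2) (Fin n → Fin 2) ℂ) :
    frob (A + B) + frob (A - B) = 2 * frob A + 2 * frob B := by
  simp only [frob, Matrix.add_apply, Matrix.sub_apply, ← Finset.sum_add_distrib, Finset.mul_sum]
  refine Finset.sum_congr rfl fun u _ => Finset.sum_congr rfl fun v _ => ?_
  simp only [Complex.normSq_apply, Complex.add_re, Complex.add_im, Complex.sub_re,
    Complex.sub_im]
  ring

lemma main_trace (ρ : ℝ) (P₀ P₁ Q₀ Q₁ : Matrix (Fin n → Fin 2) (Fin n → Fin 2) ℂ) :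
    ((bkron P₀ Q₀ + bkron P₀ Q₁ + bkron P₁ Q₀ - bkron P₁ Q₁) * depEPRn ρ n).trace
    = ((2 : ℂ) ^ n)⁻¹ *
        ((∑ u : Fin n → Fin 2, ∑ v : Fin n → Fin 2, P₀ u v * Tm ρ (Q₀ + Q₁) u v)
          + ∑ u : Fin n → Fin 2, ∑ v : Fin n → Fin 2, P₁ u v * Tm ρ (Q₀ - Q₁) u v) := by
  rw [sub_mul, add_mul, add_mul, Matrix.trace_sub, Matrix.trace_add,
    Matrix.trace_add, trace_eq, trace_eq, trace_eq, trace_eq]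
  have e0 : ∑ u : Fin n → Fin 2, ∑ v : Fin n → Fin 2, P₀ u v * Tm ρ (Q₀ + Q₁) u v
      = (∑ u : Fin n → Fin 2, ∑ v : Fin n → Fin 2, P₀ u v * Tm ρ Q₀ u v)
        + ∑ u : Fin n → Fin 2, ∑ v : Fin n → Fin 2, P₀ u v * Tm ρ Q₁ u v := by
    rw [← Finset.sum_add_distrib]
    refine Finset.sum_congr rfl fun u _ => ?_
    rw [← Finset.sum_add_distrib]
    refine Finset.sum_congr rfl fun v _ => ?_
    rw [Tm_add]; ring
  have e1 : ∑ u : Fin n → Fin 2, ∑ v : Fin n → Fin 2, P₁ u v * Tm ρ (Q₀ - Q₁) u v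
      = (∑ u : Fin n → Fin 2, ∑ v : Fin n → Fin 2, P₁ u v * Tm ρ Q₀ u v)
        - ∑ u : Fin n → Fin 2, ∑ v : Fin n → Fin 2, P₁ u v * Tm ρ Q₁ u v := by
    rw [← Finset.sum_sub_distrib]
    refine Finset.sum_congr rfl fun u _ => ?_
    rw [← Finset.sum_sub_distrib]
    refine Finset.sum_congr rfl fun v _ => ?_
    rw [Tm_sub]; ring
  rw [e0, e1]; ring

end Stmt18

set_option maxHeartbeats 4000000 in
/-- In the noisy CHSH game on `(Δ_ρ(Φ))^{⊗n}` with Hermitian observables of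
spectral norm at most 1 whose normalized traces are bounded by `ε_tr`, the CHSH violation
is at most `2√2·ρ + √2·ε_tr²/ρ` (in particular at most `2√2·ρ` for traceless
observables). -/
theorem stmt18 (n : ℕ) (ρ : ℝ) (hρ0 : 0 < ρ) (hρ1 : ρ < 1) (εtr : ℝ)
    (P₀ P₁ Q₀ Q₁ : Matrix (Fin n → Fin 2) (Fin n → Fin 2) ℂ)
    (hP₀ : P₀.IsHermitian) (hP₁ : P₁.IsHermitian)
    (hQ₀ : Q₀.IsHermitian) (hQ₁ : Q₁.IsHermitian)
    (hnP₀ : specNorm P₀ ≤ 1) (hnP₁ : specNorm P₁ ≤ 1)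
    (hnQ₀ : specNorm Q₀ ≤ 1) (hnQ₁ : specNorm Q₁ ≤ 1)
    (htrP₀ : ‖P₀.trace‖ / 2 ^ n ≤ εtr) (htrP₁ : ‖P₁.trace‖ / 2 ^ n ≤ εtr)
    (htrQ₀ : ‖Q₀.trace‖ / 2 ^ n ≤ εtr) (htrQ₁ : ‖Q₁.trace‖ / 2 ^ n ≤ εtr) :
    (((bkron P₀ Q₀ + bkron P₀ Q₁ + bkron P₁ Q₀ - bkron P₁ Q₁) * depEPRn ρ n).trace).re ≤
      2 * Real.sqrt 2 * ρ + Real.sqrt 2 * εtr ^ 2 / ρ := by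
  have hε0 : 0 ≤ εtr := le_trans (by positivity) htrQ₀
  have h2n : (0 : ℝ) < 2 ^ n := by positivity
  set α := Stmt18.frob (Stmt18.Tm ρ (Q₀ + Q₁)) with hα
  set β := Stmt18.frob (Stmt18.Tm ρ (Q₀ - Q₁)) with hβ
  have hαnn : 0 ≤ α := Stmt18.frob_nonneg _
  have hβnn : 0 ≤ β := Stmt18.frob_nonneg _
  -- frobenius bounds for the two combinations
  have hQ0b : Stmt18.frob (Stmt18.Tm ρ Q₀) ≤ 2 ^ n * (ρ ^ 2 + εtr ^ 2) :=
    Stmt18.frob_Tm_le ρ εtr hρ0.le hρ1.le hε0 Q₀ (Stmt18.frob_le_of_specNorm Q₀ hnQ₀) htrQ₀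
  have hQ1b : Stmt18.frob (Stmt18.Tm ρ Q₁) ≤ 2 ^ n * (ρ ^ 2 + εtr ^ 2) :=
    Stmt18.frob_Tm_le ρ εtr hρ0.le hρ1.le hε0 Q₁ (Stmt18.frob_le_of_specNorm Q₁ hnQ₁) htrQ₁
  have hTadd : Stmt18.Tm ρ (Q₀ + Q₁) = Stmt18.Tm ρ Q₀ + Stmt18.Tm ρ Q₁ := by
    funext u v
    rw [Stmt18.Tm_add ρ Q₀ Q₁ u v]
    rfl
  have hTsub : Stmt18.Tm ρ (Q₀ - Q₁) = Stmt18.Tm ρ Q₀ - Stmt18.Tm ρ Q₁ := by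
    funext u v
    rw [Stmt18.Tm_sub ρ Q₀ Q₁ u v]
    rfl
  have hpar : α + β = 2 * Stmt18.frob (Stmt18.Tm ρ Q₀) + 2 * Stmt18.frob (Stmt18.Tm ρ Q₁) := by
    rw [hα, hβ, hTadd, hTsub]
    exact Stmt18.frob_par _ _
  have hαβ : α + β ≤ 4 * 2 ^ n * (ρ ^ 2 + εtr ^ 2) := by
    rw [hpar]; nlinarith
  -- the trace as real expression
  set z₀ := ∑ u : Fin n → Fin 2, ∑ v : Fin n → Fin 2, P₀ u v * Stmt18.Tm ρ (Q₀ + Q₁) u v with hz₀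
  set z₁ := ∑ u : Fin n → Fin 2, ∑ v : Fin n → Fin 2, P₁ u v * Stmt18.Tm ρ (Q₀ - Q₁) u v with hz₁
  have hre : (((bkron P₀ Q₀ + bkron P₀ Q₁ + bkron P₁ Q₀ - bkron P₁ Q₁)
      * depEPRn ρ n).trace).re = ((2 : ℝ) ^ n)⁻¹ * (z₀.re + z₁.re) := by
    rw [Stmt18.main_trace, ← hz₀, ← hz₁]
    have hc : ((2 : ℂ) ^ n)⁻¹ = ((((2 : ℝ) ^ n)⁻¹ : ℝ) : ℂ) := by push_cast; norm_num
    rw [hc, Complex.re_ofReal_mul, Complex.add_re]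
  have hcs0 : z₀.re ≤ Real.sqrt (2 ^ n) * Real.sqrt α :=
    Stmt18.re_sum_le P₀ _ (Stmt18.frob_le_of_specNorm P₀ hnP₀)
  have hcs1 : z₁.re ≤ Real.sqrt (2 ^ n) * Real.sqrt β :=
    Stmt18.re_sum_le P₁ _ (Stmt18.frob_le_of_specNorm P₁ hnP₁)
  have hs : Real.sqrt (2 ^ n) * Real.sqrt ((2 : ℝ) ^ n) = 2 ^ n := Real.mul_self_sqrt h2n.le
  have hsum2 : Real.sqrt α + Real.sqrt β ≤ Real.sqrt 2 * Real.sqrt (α + β) := by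
    have h1 : (Real.sqrt α + Real.sqrt β) ^ 2 ≤ 2 * (α + β) := by
      nlinarith [Real.sq_sqrt hαnn, Real.sq_sqrt hβnn,
        sq_nonneg (Real.sqrt α - Real.sqrt β), Real.sqrt_nonneg α, Real.sqrt_nonneg β]
    have h2 : Real.sqrt 2 * Real.sqrt (α + β) = Real.sqrt (2 * (α + β)) :=
      (Real.sqrt_mul (by norm_num) _).symm
    rw [h2, ← Real.sqrt_sq (by positivity : (0:ℝ) ≤ Real.sqrt α + Real.sqrt β)]
    exact Real.sqrt_le_sqrt h1
  have hfour : Real.sqrt ((4 : ℝ) * 2 ^ n * (ρ ^ 2 + εtr ^ 2))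
      = 2 * Real.sqrt (2 ^ n) * Real.sqrt (ρ ^ 2 + εtr ^ 2) := by
    rw [Real.sqrt_mul (by positivity : (0:ℝ) ≤ 4 * 2 ^ n),
      Real.sqrt_mul (by norm_num : (0:ℝ) ≤ 4),
      show Real.sqrt 4 = 2 by
        rw [show (4 : ℝ) = 2 ^ 2 by norm_num, Real.sqrt_sq (by norm_num : (0:ℝ) ≤ 2)]]
  have hchain : Real.sqrt (α + β) ≤ 2 * Real.sqrt (2 ^ n) * Real.sqrt (ρ ^ 2 + εtr ^ 2) := by
    rw [← hfour]
    exact Real.sqrt_le_sqrt hαβ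
  have hsqrtK : Real.sqrt (ρ ^ 2 + εtr ^ 2) ≤ ρ + εtr ^ 2 / (2 * ρ) := by
    rw [← Real.sqrt_sq (by positivity : (0:ℝ) ≤ ρ + εtr ^ 2 / (2 * ρ))]
    apply Real.sqrt_le_sqrt
    have he : (ρ + εtr ^ 2 / (2 * ρ)) ^ 2
        = ρ ^ 2 + εtr ^ 2 + (εtr ^ 2 / (2 * ρ)) ^ 2 := by
      field_simp
      ring
    rw [he]
    nlinarith [sq_nonneg (εtr ^ 2 / (2 * ρ))]
  rw [hre]
  calc ((2 : ℝ) ^ n)⁻¹ * (z₀.re + z₁.re)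
      ≤ ((2 : ℝ) ^ n)⁻¹ * (Real.sqrt (2 ^ n) * Real.sqrt α
          + Real.sqrt (2 ^ n) * Real.sqrt β) := by
        apply mul_le_mul_of_nonneg_left (by linarith) (by positivity)
    _ = ((2 : ℝ) ^ n)⁻¹ * Real.sqrt (2 ^ n) * (Real.sqrt α + Real.sqrt β) := by ring
    _ ≤ ((2 : ℝ) ^ n)⁻¹ * Real.sqrt (2 ^ n) * (Real.sqrt 2 * Real.sqrt (α + β)) := by
        apply mul_le_mul_of_nonneg_left hsum2 (by positivity)
    _ ≤ ((2 : ℝ) ^ n)⁻¹ * Real.sqrt (2 ^ n) *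
          (Real.sqrt 2 * (2 * Real.sqrt (2 ^ n) * Real.sqrt (ρ ^ 2 + εtr ^ 2))) := by
        apply mul_le_mul_of_nonneg_left
          (mul_le_mul_of_nonneg_left hchain (Real.sqrt_nonneg 2)) (by positivity)
    _ = ((2 : ℝ) ^ n)⁻¹ * (Real.sqrt (2 ^ n) * Real.sqrt ((2:ℝ) ^ n))
          * (2 * Real.sqrt 2 * Real.sqrt (ρ ^ 2 + εtr ^ 2)) := by ring
    _ = 2 * Real.sqrt 2 * Real.sqrt (ρ ^ 2 + εtr ^ 2) := by
        rw [hs, inv_mul_cancel₀ h2n.ne']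
        ring
    _ ≤ 2 * Real.sqrt 2 * (ρ + εtr ^ 2 / (2 * ρ)) := by
        apply mul_le_mul_of_nonneg_left hsqrtK (by positivity)
    _ = 2 * Real.sqrt 2 * ρ + Real.sqrt 2 * εtr ^ 2 / ρ := by
        field_simp
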